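/- Let C be a category with an initial object, binary coproducts, and pullbacks, which has splitting coproducts and disjoint coproducts. Then every morphism c : A ⟶ B belonging to the left lifting class of the split epimorphisms (i.e. c ⧄ g for every split epimorphism g) is isomorphic to a coproduct coprojection: there exist an object X and an isomorphism φ : A ⨿ X ≅ B such that the first coprojection A ⟶ A ⨿ X composed with φ equals c. -/

import Mathlib

open CategoryTheory CategoryTheory.Limits

universe v u

/-- A category has splitting coproducts if every morphism into a binary coproduct
is, up to isomorphism, a coproduct of two morphisms. -/
def HasSplittingCoproducts (C : Type u) [Category.{v} C] [HasBinaryCoproducts C] : Prop :=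
  ∀ ⦃X A B : C⦄ (f : X ⟶ A ⨿ B), ∃ (XL XR : C) (fL : XL ⟶ A) (fR : XR ⟶ B)
    (φ : XL ⨿ XR ≅ X), φ.hom ≫ f = coprod.map fL fR

/-- In a category with splitting and disjoint coproducts, every morphism with the
left lifting property with respect to all split epimorphisms is isomorphic to a
coproduct coprojection. -/
theorem cofibration_isCoprodInclusion
    {C : Type u} [Category.{v} C] [HasInitial C] [HasBinaryCoproducts C]
    [HasPullbacks C] (hsplit : HasSplittingCoproducts C)
    [∀ A B : C, BinaryCoproductDisjoint A B]
    {A B : C} (c : A ⟶ B)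
    (hc : ∀ ⦃X Y : C⦄ (g : X ⟶ Y), IsSplitEpi g → HasLiftingProperty c g) :
    ∃ (X : C) (φ : A ⨿ X ≅ B), coprod.inl ≫ φ.hom = c := by
  -- the split epimorphism `g : A ⨿ B ⟶ B`
  set g : A ⨿ B ⟶ B := coprod.desc c (𝟙 B) with hgdef
  have hge : IsSplitEpi g := IsSplitEpi.mk' ⟨coprod.inr, by rw [hgdef]; exact coprod.inr_desc _ _⟩
  haveI := hc g hge
  have sq : CommSq (coprod.inl : A ⟶ A ⨿ B) c g (𝟙 B) := ⟨by rw [hgdef]; exact (coprod.inl_desc _ _).trans (Category.comp_id _).symm⟩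
  set l : B ⟶ A ⨿ B := sq.lift with hldef
  have hl1 : c ≫ l = coprod.inl := sq.fac_left
  have hl2 : l ≫ g = 𝟙 B := sq.fac_right
  -- split the lift `l : B ⟶ A ⨿ B`
  obtain ⟨BL, BR, lL, lR, φ, hφ⟩ := hsplit l
  -- from `l ≫ g = 𝟙`: `φ.hom = coprod.desc (lL ≫ c) lR`
  have hφg : φ.hom = coprod.map lL lR ≫ g := by
    rw [← hφ, Category.assoc, hl2, Category.comp_id]
  have hφl : (coprod.inl : BL ⟶ BL ⨿ BR) ≫ φ.hom = lL ≫ c := by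
    rw [hφg, hgdef]; simp; exact coprod.inl_desc _ _
  -- `lL` is a monomorphism
  haveI : Mono (lL ≫ c) := by rw [← hφl]; infer_instance
  haveI : Mono lL := mono_of_mono lL c
  -- split `c ≫ φ.inv : A ⟶ BL ⨿ BR`
  obtain ⟨A1, A2, c1, c2, ψ, hψ⟩ := hsplit (c ≫ φ.inv)
  -- key identity coming from `c ≫ l = coprod.inl`
  have key : ψ.hom ≫ (coprod.inl : A ⟶ A ⨿ B) = coprod.map (c1 ≫ lL) (c2 ≫ lR) := by
    have h1 : ψ.hom ≫ (c ≫ φ.inv) ≫ (φ.hom ≫ l) = coprod.map c1 c2 ≫ coprod.map lL lR := by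
      rw [← Category.assoc, hψ, hφ]
    simpa [hl1, coprod.map_map] using h1
  have key1 : (coprod.inl : A1 ⟶ A1 ⨿ A2) ≫ ψ.hom = c1 ≫ lL := by
    have h2 : ((coprod.inl : A1 ⟶ A1 ⨿ A2) ≫ ψ.hom) ≫ (coprod.inl : A ⟶ A ⨿ B)
        = (c1 ≫ lL) ≫ coprod.inl := by
      rw [Category.assoc, key]; simp
    exact (cancel_mono _).1 h2
  have key2 : ((coprod.inr : A2 ⟶ A1 ⨿ A2) ≫ ψ.hom) ≫ (coprod.inl : A ⟶ A ⨿ B)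
      = (c2 ≫ lR) ≫ (coprod.inr : B ⟶ A ⨿ B) := by
    rw [Category.assoc, key]; simp
  -- disjointness: the pullback of the two coprojections of `A ⨿ B` is initial
  have hP : IsInitial (pullback (coprod.inl : A ⟶ A ⨿ B) (coprod.inr : B ⟶ A ⨿ B)) :=
    IsInitial.ofBinaryCoproductDisjoint
  set k : A2 ⟶ pullback (coprod.inl : A ⟶ A ⨿ B) (coprod.inr : B ⟶ A ⨿ B) :=
    pullback.lift _ _ key2 with hkdef
  -- a section of `lL`
  have hs : (ψ.inv ≫ coprod.desc c1 (k ≫ hP.to BL)) ≫ lL = 𝟙 A := by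
    rw [Category.assoc, ← cancel_epi ψ.hom]
    rw [← Category.assoc, ← Category.assoc, ψ.hom_inv_id, Category.id_comp, Category.comp_id]
    apply coprod.hom_ext
    · exact (coprod.inl_desc_assoc _ _ _).trans key1.symm
    · have h3 : (coprod.inr : A2 ⟶ A1 ⨿ A2) ≫ ψ.hom = k ≫ pullback.fst _ _ := by
        rw [hkdef, pullback.lift_fst]
      rw [h3]
      simp only [coprod.inr_desc_assoc, Category.assoc]
      exact congrArg (k ≫ ·) (hP.hom_ext _ _)
  haveI : IsSplitEpi lL := IsSplitEpi.mk' ⟨_, hs⟩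
  haveI : IsIso lL := isIso_of_mono_of_isSplitEpi lL
  -- assemble the final isomorphism
  refine ⟨BR, coprod.mapIso (asIso lL).symm (Iso.refl BR) ≪≫ φ, ?_⟩
  simp [← hφl]
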